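/- Let k ≤ n and let ω, ω′ be two effective k-forms on V such that for every k-dimensional isotropic subspace L of (V, Ω), the restriction of ω to L vanishes if and only if the restriction of ω′ to L vanishes. Then ω and ω′ are linearly dependent (one is a scalar multiple of the other). -/

import Mathlib

open scoped TensorProduct

/-- The wedge product of alternating forms with values in a commutative algebra `A`
(determinant/shuffle convention, via `AlternatingMap.domCoprod`). -/
noncomputable def wedge {V : Type*} [AddCommGroup V] [Module ℝ V]
    {A : Type*} [CommRing A] [Algebra ℝ A] {k l : ℕ}
    (α : AlternatingMap ℝ V A (Fin k)) (β : AlternatingMap ℝ V A (Fin l)) :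
    AlternatingMap ℝ V A (Fin (k + l)) :=
  (LinearMap.mul' ℝ A).compAlternatingMap ((α.domCoprod β).domDomCongr finSumFinEquiv)

/-- A covector regarded as an alternating `1`-form. -/
noncomputable def oneForm {V : Type*} [AddCommGroup V] [Module ℝ V]
    {A : Type*} [CommRing A] [Algebra ℝ A] (ξ : V →ₗ[ℝ] A) :
    AlternatingMap ℝ V A (Fin 1) :=
  AlternatingMap.ofSubsingleton ℝ V A (0 : Fin 1) ξ

/-- Contraction `⊥` of a form with the bivector `Σⱼ eⱼ ∧ fⱼ` associated with a
symplectic basis `(e, f)`:  `⊥α = Σⱼ ι_{fⱼ} ι_{eⱼ} α`. -/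
noncomputable def sympContract {V : Type*} [AddCommGroup V] [Module ℝ V] {n : ℕ}
    (e f : Fin n → V) {m : ℕ} (α : AlternatingMap ℝ V ℝ (Fin (m + 2))) :
    AlternatingMap ℝ V ℝ (Fin m) :=
  ∑ j : Fin n, ((α.curryLeft (e j)).curryLeft (f j))

/-- A form is effective if its contraction with the bivector of the symplectic
structure vanishes (vacuously true in degrees `< 2`). -/
def IsEffective {V : Type*} [AddCommGroup V] [Module ℝ V] {n : ℕ}
    (e f : Fin n → V) {m : ℕ} (α : AlternatingMap ℝ V ℝ (Fin m)) : Prop :=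
  ∀ (m' : ℕ) (h : m = m' + 2), sympContract e f (α.domDomCongr (finCongr h)) = 0


namespace EFP

variable {V : Type*} [AddCommGroup V] [Module ℝ V]

/-- Evaluation of an alternating map at a fixed tuple, as a linear map. -/
def evAt {m : ℕ} (v : Fin m → V) : (AlternatingMap ℝ V ℝ (Fin m)) →ₗ[ℝ] ℝ where
  toFun f := f v
  map_add' f g := rfl
  map_smul' c f := rfl

section Bil

variable (Ω : AlternatingMap ℝ V ℝ (Fin 2))

lemma cons_eval {m : ℕ} (ω : AlternatingMap ℝ V ℝ (Fin (m+1))) (x : V) (w : Fin m → V) :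
    ω (Fin.cons x w) = (ω.curryLeft x) w := rfl

/-- The bilinear form associated to `Ω`. -/
def om2 : V →ₗ[ℝ] V →ₗ[ℝ] ℝ where
  toFun x := (evAt (![] : Fin 0 → V)).comp ((Ω.curryLeft x).curryLeft)
  map_add' x y := by
    ext z
    simp [evAt]
  map_smul' c x := by
    ext z
    simp [evAt]

lemma om2_apply (x y : V) : om2 Ω x y = Ω ![x, y] := rfl

lemma om_self (x : V) : Ω ![x, x] = 0 :=
  Ω.map_eq_zero_of_eq _ (show (![x,x] : Fin 2 → V) 0 = ![x,x] 1 by simp)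
    (by decide)

lemma om_add_left (x y z : V) : Ω ![x + y, z] = Ω ![x, z] + Ω ![y, z] := by
  rw [← om2_apply, ← om2_apply, ← om2_apply, map_add, LinearMap.add_apply]

lemma om_add_right (x y z : V) : Ω ![x, y + z] = Ω ![x, y] + Ω ![x, z] := by
  rw [← om2_apply, ← om2_apply, ← om2_apply]
  exact map_add ((om2 Ω) x) y z

lemma om_smul_left (c : ℝ) (x z : V) : Ω ![c • x, z] = c * Ω ![x, z] := by
  rw [← om2_apply, ← om2_apply, map_smul, LinearMap.smul_apply, smul_eq_mul]

lemma om_smul_right (c : ℝ) (x z : V) : Ω ![x, c • z] = c * Ω ![x, z] := by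
  rw [← om2_apply, ← om2_apply, map_smul, smul_eq_mul]

lemma om_skew (x y : V) : Ω ![y, x] = - Ω ![x, y] := by
  have h := om_self Ω (x + y)
  rw [om_add_left, om_add_right, om_add_right, om_self, om_self] at h
  linarith

lemma om_zero_left (y : V) : Ω ![0, y] = 0 := by
  have := om_smul_left Ω 0 0 y
  simpa using this

lemma om_zero_right (x : V) : Ω ![x, 0] = 0 := by
  rw [om_skew]; simp [om_zero_left]

lemma om_sub_right (x y z : V) : Ω ![x, y - z] = Ω ![x, y] - Ω ![x, z] := by
  rw [← om2_apply, ← om2_apply, ← om2_apply, map_sub]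

end Bil

section Tv

variable (Ω : AlternatingMap ℝ V ℝ (Fin 2))

/-- Symplectic transvection as a linear map. -/
noncomputable def tvL (a : V) (t : ℝ) : V →ₗ[ℝ] V :=
  LinearMap.id + t • (LinearMap.toSpanSingleton ℝ V a).comp ((om2 Ω).flip a)

lemma tvL_apply (a : V) (t : ℝ) (x : V) :
    tvL Ω a t x = x + (t * Ω ![x, a]) • a := by
  simp [tvL, LinearMap.toSpanSingleton, om2_apply, smul_smul, LinearMap.id_apply]

lemma tvL_comp (a : V) (s t : ℝ) (x : V) :
    tvL Ω a s (tvL Ω a t x) = tvL Ω a (s + t) x := by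
  have h : Ω ![x + (t * Ω ![x, a]) • a, a] = Ω ![x, a] := by
    rw [om_add_left, om_smul_left, om_self]; ring
  rw [tvL_apply, tvL_apply, tvL_apply, h]
  module

/-- Symplectic transvection as a linear equivalence. -/
noncomputable def tv (a : V) (t : ℝ) : V ≃ₗ[ℝ] V :=
  LinearEquiv.ofLinear (tvL Ω a t) (tvL Ω a (-t))
    (by
      ext x
      simp only [LinearMap.comp_apply, LinearMap.id_apply]
      rw [tvL_comp]
      simp [tvL_apply])
    (by
      ext x
      simp only [LinearMap.comp_apply, LinearMap.id_apply]
      rw [tvL_comp]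
      simp [tvL_apply])

lemma tv_apply (a : V) (t : ℝ) (x : V) :
    tv Ω a t x = x + (t * Ω ![x, a]) • a := tvL_apply Ω a t x

lemma tv_om (a : V) (t : ℝ) (x y : V) :
    Ω ![tv Ω a t x, tv Ω a t y] = Ω ![x, y] := by
  rw [tv_apply, tv_apply, om_add_left, om_add_right, om_add_right,
    om_smul_left, om_smul_right, om_smul_left, om_smul_right, om_self]
  rw [om_skew Ω a y]
  ring

lemma tv_zero (a : V) (x : V) : tv Ω a 0 x = x := by
  rw [tv_apply]; simp

end Tv

section Words

variable (Ω : AlternatingMap ℝ V ℝ (Fin 2))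

/-- The linear automorphism given by a word of transvections; head applied first. -/
noncomputable def wd : List (V × ℝ) → (V ≃ₗ[ℝ] V) := fun W =>
  W.foldr (fun p g => (tv Ω p.1 p.2).trans g) (LinearEquiv.refl ℝ V)

lemma wd_nil : wd Ω ([] : List (V × ℝ)) = LinearEquiv.refl ℝ V := rfl

lemma wd_cons (p : V × ℝ) (W : List (V × ℝ)) (x : V) :
    wd Ω (p :: W) x = wd Ω W (tv Ω p.1 p.2 x) := rfl

lemma wd_om (W : List (V × ℝ)) (x y : V) :
    Ω ![wd Ω W x, wd Ω W y] = Ω ![x, y] := by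
  induction W generalizing x y with
  | nil => rfl
  | cons p W ih => rw [wd_cons, wd_cons, ih, tv_om]

lemma wd_append (W₁ W₂ : List (V × ℝ)) (x : V) :
    wd Ω (W₁ ++ W₂) x = wd Ω W₂ (wd Ω W₁ x) := by
  induction W₁ generalizing x with
  | nil => rfl
  | cons p W ih => rw [List.cons_append, wd_cons, wd_cons, ih]

/-- conjugation of a transvection by an `Ω`-preserving equivalence -/
lemma conj_tv (G : V ≃ₗ[ℝ] V) (hG : ∀ x y, Ω ![G x, G y] = Ω ![x, y])
    (a : V) (t : ℝ) (x : V) :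
    tv Ω (G a) t (G x) = G (tv Ω a t x) := by
  rw [tv_apply, tv_apply, hG]
  simp [map_add, map_smul]

end Words

section Affine

variable {k : ℕ}

theorem map_affine (ω : AlternatingMap ℝ V ℝ (Fin k)) (u : Fin k → V) (c : Fin k → ℝ) (a : V) :
    ω (fun i => u i + c i • a) = ω u + ∑ i, c i * ω (Function.update u i a) := by
  classical
  have key : ∀ S : Finset (Fin k), ∀ (u : Fin k → V) (c : Fin k → ℝ),
      ω (S.piecewise (fun i => u i + c i • a) u) = ω u + ∑ i ∈ S, c i * ω (Function.update u i a) := by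
    intro S
    induction S using Finset.induction with
    | empty => intro u c; simp
    | @insert j S hj ih =>
      intro u c
      rw [Finset.piecewise_insert]
      have hPj : S.piecewise (fun i => u i + c i • a) u j = u j :=
        Finset.piecewise_eq_of_notMem _ _ _ hj
      have h1 : ω (Function.update (S.piecewise (fun i => u i + c i • a) u) j (u j + c j • a))
          = ω (Function.update (S.piecewise (fun i => u i + c i • a) u) j (u j))
            + c j • ω (Function.update (S.piecewise (fun i => u i + c i • a) u) j a) := by
        rw [ω.map_update_add]
        congr 1
        rw [ω.map_update_smul]
      have h2 : Function.update (S.piecewise (fun i => u i + c i • a) u) j (u j)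
          = S.piecewise (fun i => u i + c i • a) u := by
        rw [← hPj]; exact Function.update_eq_self _ _
      have h3 : Function.update (S.piecewise (fun i => u i + c i • a) u) j a
          = S.piecewise (fun i => (Function.update u j a) i + (Function.update c j 0) i • a)
              (Function.update u j a) := by
        funext i
        by_cases hij : i = j
        · subst hij
          rw [Function.update_self, Finset.piecewise_eq_of_notMem _ _ _ hj,
            Function.update_self]
        · rw [Function.update_of_ne hij]
          by_cases hiS : i ∈ S
          · rw [Finset.piecewise_eq_of_mem _ _ _ hiS, Finset.piecewise_eq_of_mem _ _ _ hiS,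
              Function.update_of_ne hij, Function.update_of_ne hij]
          · rw [Finset.piecewise_eq_of_notMem _ _ _ hiS,
              Finset.piecewise_eq_of_notMem _ _ _ hiS, Function.update_of_ne hij]
      have h4 : ω (Function.update (S.piecewise (fun i => u i + c i • a) u) j a)
          = ω (Function.update u j a) := by
        rw [h3, ih]
        have hz : ∀ i ∈ S, (Function.update c j 0) i *
            ω (Function.update (Function.update u j a) i a) = 0 := by
          intro i hiS
          have hij : i ≠ j := by rintro rfl; exact hj hiS
          have : ω (Function.update (Function.update u j a) i a) = 0 := by
            apply ω.map_eq_zero_of_eq _ _ hij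
            rw [Function.update_self, Function.update_of_ne (Ne.symm hij), Function.update_self]
          rw [this, mul_zero]
        rw [Finset.sum_congr rfl hz]
        simp
      rw [h1, h2, h4, ih u c, Finset.sum_insert hj, smul_eq_mul]
      ring
  have := key Finset.univ u c
  simpa [Finset.piecewise_univ] using this

end Affine

section RealAlg

lemma affine_pair_cross {α β γ δ : ℝ} (h : ∀ s : ℝ, α + s * β = 0 ↔ γ + s * δ = 0) :
    α * δ = γ * β := by
  by_cases hβ : β = 0
  · by_cases hδ : δ = 0
    · rw [hβ, hδ]; ring
    · by_cases hα : α = 0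
      · have h0 : γ = 0 := by have := (h 0).mp (by simp [hα]); linarith
        have h1 : γ + 1 * δ = 0 := (h 1).mp (by simp [hα, hβ])
        rw [hα]; rw [h0] at h1 ⊢; ring
      · exfalso
        have := (h (-γ/δ)).mpr (by field_simp; ring)
        rw [hβ] at this; simp at this; exact hα this
  · have := (h (-α/β)).mp (by field_simp; ring)
    have h2 : γ * β + (-α) * δ = 0 := by
      field_simp at this
      linarith
    linarith

lemma bad_subsingleton {α β γ δ : ℝ} (hne : ¬(α = 0 ∧ β = 0 ∧ γ = 0 ∧ δ = 0)) :
    ∀ s t : ℝ, (α + s * β = 0 ∧ γ + s * δ = 0) → (α + t * β = 0 ∧ γ + t * δ = 0) → s = t := by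
  intro s t hs ht
  by_contra hst
  apply hne
  have hβ : β = 0 := by
    have := sub_eq_zero.mpr (hs.1.trans ht.1.symm)
    have h2 : (s - t) * β = 0 := by linarith
    rcases mul_eq_zero.mp h2 with h | h
    · exact absurd (sub_eq_zero.mp h) hst
    · exact h
  have hδ : δ = 0 := by
    have := sub_eq_zero.mpr (hs.2.trans ht.2.symm)
    have h2 : (s - t) * δ = 0 := by linarith
    rcases mul_eq_zero.mp h2 with h | h
    · exact absurd (sub_eq_zero.mp h) hst
    · exact h
  have hα : α = 0 := by have := hs.1; rw [hβ] at this; linarith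
  have hγ : γ = 0 := by have := hs.2; rw [hδ] at this; linarith
  exact ⟨hα, hβ, hγ, hδ⟩

lemma pick_good {P Q : ℝ → Prop} (hP : ∀ s t, P s → P t → s = t)
    (hQ : ∀ s t, Q s → Q t → s = t) : ∃ t : ℝ, ¬ P t ∧ ¬ Q t := by
  by_contra h
  push_neg at h
  have h0 := or_iff_not_imp_left.mpr (h 0)
  have h1 := or_iff_not_imp_left.mpr (h 1)
  have h2 := or_iff_not_imp_left.mpr (h 2)
  rcases h0 with p0 | q0 <;> rcases h1 with p1 | q1 <;> rcases h2 with p2 | q2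
  · exact absurd (hP 0 1 p0 p1) (by norm_num)
  · exact absurd (hP 0 1 p0 p1) (by norm_num)
  · exact absurd (hP 0 2 p0 p2) (by norm_num)
  · exact absurd (hQ 1 2 q1 q2) (by norm_num)
  · exact absurd (hP 1 2 p1 p2) (by norm_num)
  · exact absurd (hQ 0 2 q0 q2) (by norm_num)
  · exact absurd (hQ 0 1 q0 q1) (by norm_num)
  · exact absurd (hQ 0 1 q0 q1) (by norm_num)

lemma cross3 {pu qu pv qv pw qw : ℝ} (h1 : pu * qv = qu * pv) (h2 : pv * qw = qv * pw)
    (hv : ¬(pv = 0 ∧ qv = 0)) : pu * qw = qu * pw := by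
  by_cases hpv : pv = 0
  · have hqv : qv ≠ 0 := fun h => hv ⟨hpv, h⟩
    have hpu : pu = 0 := by
      have := h1; rw [hpv, mul_zero] at this
      rcases mul_eq_zero.mp this with h | h
      · exact h
      · exact absurd h hqv
    have hpw : pw = 0 := by
      have := h2; rw [hpv, zero_mul] at this
      rcases mul_eq_zero.mp this.symm with h | h
      · exact absurd h hqv
      · exact h
    rw [hpu, hpw]; ring
  · apply mul_left_cancel₀ hpv
    calc pv * (pu * qw) = pu * (pv * qw) := by ring
    _ = pu * (qv * pw) := by rw [h2]
    _ = (pu * qv) * pw := by ring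
    _ = (qu * pv) * pw := by rw [h1]
    _ = pv * (qu * pw) := by ring

end RealAlg

end EFP


namespace EFP

variable {V : Type*} [AddCommGroup V] [Module ℝ V]

section Lines

variable (Ω : AlternatingMap ℝ V ℝ (Fin 2)) {k : ℕ}

/-- An isotropic tuple. -/
def IsIso (v : Fin k → V) : Prop := ∀ i j, Ω ![v i, v j] = 0

lemma IsIso.map {g : V ≃ₗ[ℝ] V} (hg : ∀ x y, Ω ![g x, g y] = Ω ![x, y]) {v : Fin k → V}
    (hv : IsIso Ω v) : IsIso Ω (⇑g ∘ v) := fun i j => by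
  simp only [Function.comp_apply]; rw [hg]; exact hv i j

lemma line_val (ω : AlternatingMap ℝ V ℝ (Fin k)) (u : Fin k → V) (a : V) (t : ℝ) :
    ω (⇑(tv Ω a t) ∘ u) = ω u + t * ∑ i, Ω ![u i, a] * ω (Function.update u i a) := by
  have h : ⇑(tv Ω a t) ∘ u = fun i => u i + (t * Ω ![u i, a]) • a :=
    funext fun i => tv_apply Ω a t (u i)
  rw [h, map_affine, Finset.mul_sum]
  congr 1
  exact Finset.sum_congr rfl fun i _ => by ring

lemma line_iso {u : Fin k → V} (hu : IsIso Ω u) (a : V) (t : ℝ) :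
    IsIso Ω (⇑(tv Ω a t) ∘ u) := IsIso.map Ω (tv_om Ω a t) hu

lemma line_cross (ω ω' : AlternatingMap ℝ V ℝ (Fin k))
    (hiff : ∀ v : Fin k → V, IsIso Ω v → (ω v = 0 ↔ ω' v = 0))
    {u : Fin k → V} (hu : IsIso Ω u) (a : V) (t : ℝ) :
    ω u * ω' (⇑(tv Ω a t) ∘ u) = ω' u * ω (⇑(tv Ω a t) ∘ u) := by
  have hcross : ω u * (∑ i, Ω ![u i, a] * ω' (Function.update u i a))
      = ω' u * (∑ i, Ω ![u i, a] * ω (Function.update u i a)) := by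
    apply affine_pair_cross
    intro s
    rw [← line_val, ← line_val]
    exact hiff _ (line_iso Ω hu a s)
  rw [line_val, line_val]
  linear_combination t * hcross

lemma line_bads (ω ω' : AlternatingMap ℝ V ℝ (Fin k)) {u : Fin k → V} (a : V)
    (hgood : ¬(ω u = 0 ∧ ω' u = 0)) :
    ∀ s t : ℝ, (ω (⇑(tv Ω a s) ∘ u) = 0 ∧ ω' (⇑(tv Ω a s) ∘ u) = 0) →
      (ω (⇑(tv Ω a t) ∘ u) = 0 ∧ ω' (⇑(tv Ω a t) ∘ u) = 0) → s = t := by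
  intro s t hs ht
  rw [line_val, line_val] at hs ht
  exact bad_subsingleton (fun hall => hgood ⟨hall.1, hall.2.2.1⟩) s t hs ht

lemma tv_comp (a : V) (s t : ℝ) (x : V) : tv Ω a s (tv Ω a t x) = tv Ω a (s + t) x :=
  tvL_comp Ω a s t x

theorem word_cross (ω ω' : AlternatingMap ℝ V ℝ (Fin k))
    (hiff : ∀ v : Fin k → V, IsIso Ω v → (ω v = 0 ↔ ω' v = 0)) :
    ∀ (W : List (V × ℝ)) (u : Fin k → V), IsIso Ω u →
      ¬(ω u = 0 ∧ ω' u = 0) → ¬(ω (⇑(wd Ω W) ∘ u) = 0 ∧ ω' (⇑(wd Ω W) ∘ u) = 0) →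
      ω u * ω' (⇑(wd Ω W) ∘ u) = ω' u * ω (⇑(wd Ω W) ∘ u) := by
  intro W
  induction W with
  | nil =>
    intro u _ _ _
    have : ⇑(wd Ω ([] : List (V × ℝ))) ∘ u = u := rfl
    rw [this, mul_comm]
  | cons p W ih =>
    intro u hu hgu hgw
    have hwcomp : ⇑(wd Ω (p :: W)) ∘ u = ⇑(wd Ω W) ∘ (⇑(tv Ω p.1 p.2) ∘ u) := rfl
    by_cases hv : (ω (⇑(tv Ω p.1 p.2) ∘ u) = 0 ∧ ω' (⇑(tv Ω p.1 p.2) ∘ u) = 0)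
    · -- bad middle point: perturb
      set a := p.1
      set t₁ := p.2
      set G := wd Ω W with hG
      set w := ⇑(wd Ω (p :: W)) ∘ u with hw
      have hwiso : IsIso Ω w := IsIso.map Ω (wd_om Ω (p :: W)) hu
      -- pick a good parameter
      obtain ⟨t', hP, hQ⟩ := pick_good
        (P := fun s => (ω (⇑(tv Ω a s) ∘ u) = 0 ∧ ω' (⇑(tv Ω a s) ∘ u) = 0))
        (Q := fun s => (ω (⇑(tv Ω (G a) (s - t₁)) ∘ w) = 0 ∧ ω' (⇑(tv Ω (G a) (s - t₁)) ∘ w) = 0))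
        (line_bads Ω ω ω' a hgu)
        (by
          intro s t hs ht
          have hsub := line_bads Ω ω ω' (u := w) (G a) hgw
          have := hsub (s - t₁) (t - t₁) hs ht
          linarith)
      set u' := ⇑(tv Ω a t') ∘ u with hu'
      have hu'iso : IsIso Ω u' := line_iso Ω hu a t'
      -- key conjugation identity
      have hkey : ⇑(wd Ω W) ∘ u' = ⇑(tv Ω (G a) (t' - t₁)) ∘ w := by
        funext i
        show (wd Ω W) (tv Ω a t' (u i)) = tv Ω (G a) (t' - t₁) (w i)
        have h1 : tv Ω a t' (u i) = tv Ω a (t' - t₁) (tv Ω a t₁ (u i)) := by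
          rw [tv_comp, sub_add_cancel]
        have h2 : w i = (wd Ω W) (tv Ω a t₁ (u i)) := rfl
        rw [h1, h2]
        exact (conj_tv Ω G (wd_om Ω W) a (t' - t₁) (tv Ω a t₁ (u i))).symm
      have c_a : ω u * ω' u' = ω' u * ω u' := line_cross Ω ω ω' hiff hu a t'
      have c_b : ω u' * ω' (⇑(wd Ω W) ∘ u') = ω' u' * ω (⇑(wd Ω W) ∘ u') := by
        apply ih u' hu'iso hP
        rw [hkey]; exact hQ
      have c_c : ω w * ω' (⇑(tv Ω (G a) (t' - t₁)) ∘ w) = ω' w * ω (⇑(tv Ω (G a) (t' - t₁)) ∘ w) :=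
        line_cross Ω ω ω' hiff hwiso (G a) (t' - t₁)
      rw [hkey] at c_b
      have c_ab : ω u * ω' (⇑(tv Ω (G a) (t' - t₁)) ∘ w) = ω' u * ω (⇑(tv Ω (G a) (t' - t₁)) ∘ w) :=
        cross3 c_a c_b hP
      -- combine c_ab with (reversed) c_c
      have c_c' : ω (⇑(tv Ω (G a) (t' - t₁)) ∘ w) * ω' w = ω' (⇑(tv Ω (G a) (t' - t₁)) ∘ w) * ω w := by
        linarith [c_c]
      exact cross3 c_ab c_c' hQ
    · have c1 : ω u * ω' (⇑(tv Ω p.1 p.2) ∘ u) = ω' u * ω (⇑(tv Ω p.1 p.2) ∘ u) :=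
        line_cross Ω ω ω' hiff hu p.1 p.2
      have c2 := ih (⇑(tv Ω p.1 p.2) ∘ u) (line_iso Ω hu p.1 p.2) hv (by rw [← hwcomp]; exact hgw)
      rw [hwcomp]
      exact cross3 c1 c2 hv

end Lines

end EFP


namespace EFP

variable {V : Type*} [AddCommGroup V] [Module ℝ V]

section Witt

variable (Ω : AlternatingMap ℝ V ℝ (Fin 2))

lemma flat_injective (hnd : ∀ x : V, (∀ y, Ω ![x, y] = 0) → x = 0) :
    Function.Injective ((om2 Ω).flip) := by
  rw [← LinearMap.ker_eq_bot]
  rw [LinearMap.ker_eq_bot']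
  intro ζ hζ
  apply hnd
  intro y
  rw [om_skew, show Ω ![y, ζ] = ((om2 Ω).flip ζ) y from rfl, hζ]
  simp

lemma flat_surjective [FiniteDimensional ℝ V] (hnd : ∀ x : V, (∀ y, Ω ![x, y] = 0) → x = 0) :
    Function.Surjective ((om2 Ω).flip : V →ₗ[ℝ] Module.Dual ℝ V) :=
  (LinearMap.injective_iff_surjective_of_finrank_eq_finrank
    (Subspace.dual_finrank_eq (K := ℝ) (V := V)).symm).mp (flat_injective Ω hnd)

lemma exists_dual [FiniteDimensional ℝ V] (hnd : ∀ x : V, (∀ y, Ω ![x, y] = 0) → x = 0)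
    {r : ℕ} (v : Fin r → V) (hv : LinearIndependent ℝ v) (i₀ : Fin r) :
    ∃ ζ, ∀ i, Ω ![v i, ζ] = if i = i₀ then 1 else 0 := by
  classical
  set S := Submodule.span ℝ (Set.range v) with hS
  let bS : Module.Basis (Fin r) ℝ S := Module.Basis.span hv
  obtain ⟨ψ, hψ⟩ := Subspace.dualRestrict_surjective (W := S) (bS.coord i₀)
  obtain ⟨ζ, hζ⟩ := flat_surjective Ω hnd ψ
  refine ⟨ζ, fun i => ?_⟩
  have hmem : v i ∈ S := Submodule.subset_span (Set.mem_range_self i)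
  have h1 : Ω ![v i, ζ] = ψ (v i) := by
    rw [show Ω ![v i, ζ] = ((om2 Ω).flip ζ) (v i) from rfl, hζ]
  have h2 : ψ (v i) = (S.dualRestrict ψ) ⟨v i, hmem⟩ := (S.dualRestrict_apply ψ ⟨v i, hmem⟩).symm
  have h3 : (⟨v i, hmem⟩ : S) = bS i := Subtype.ext (Module.Basis.coe_span_apply hv i).symm
  rw [h1, h2, hψ, h3]
  rw [Module.Basis.coord_apply, Module.Basis.repr_self, Finsupp.single_apply]

lemma tv_fix (a : V) (t : ℝ) (x : V) (h : Ω ![x, a] = 0) : tv Ω a t x = x := by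
  rw [tv_apply, h]
  simp

lemma tv_hit (x y : V) (h : Ω ![x, y] ≠ 0) : tv Ω (y - x) (Ω ![x, y])⁻¹ x = y := by
  rw [tv_apply]
  have hx : Ω ![x, y - x] = Ω ![x, y] := by rw [om_sub_right, om_self, sub_zero]
  rw [hx, inv_mul_cancel₀ h, one_smul]
  abel

lemma move1 [FiniteDimensional ℝ V] (hnd : ∀ x : V, (∀ y, Ω ![x, y] = 0) → x = 0)
    {r : ℕ} (z : Fin r → V) (x y : V)
    (hzx : ∀ i, Ω ![z i, x] = 0) (hzy : ∀ i, Ω ![z i, y] = 0)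
    (hlx : LinearIndependent ℝ (Fin.snoc z x : Fin (r+1) → V))
    (hly : LinearIndependent ℝ (Fin.snoc z y : Fin (r+1) → V)) :
    ∃ W : List (V × ℝ), (∀ i, wd Ω W (z i) = z i) ∧ wd Ω W x = y := by
  classical
  by_cases hxy : Ω ![x, y] = 0
  · -- need an intermediate vector ζ
    obtain ⟨ζ₁, hζ₁⟩ := exists_dual Ω hnd _ hlx (Fin.last r)
    obtain ⟨ζ₂, hζ₂⟩ := exists_dual Ω hnd _ hly (Fin.last r)
    have hz1 : ∀ i : Fin r, Ω ![z i, ζ₁] = 0 := by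
      intro i
      have := hζ₁ i.castSucc
      rwa [Fin.snoc_castSucc, if_neg (Fin.castSucc_lt_last i).ne] at this
    have hz2 : ∀ i : Fin r, Ω ![z i, ζ₂] = 0 := by
      intro i
      have := hζ₂ i.castSucc
      rwa [Fin.snoc_castSucc, if_neg (Fin.castSucc_lt_last i).ne] at this
    have hx1 : Ω ![x, ζ₁] = 1 := by
      have := hζ₁ (Fin.last r); rwa [Fin.snoc_last, if_pos rfl] at this
    have hy2 : Ω ![y, ζ₂] = 1 := by
      have := hζ₂ (Fin.last r); rwa [Fin.snoc_last, if_pos rfl] at this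
    -- choose ζ with Ω![x,ζ] ≠ 0 and Ω![y,ζ] ≠ 0 and Ω![z i, ζ] = 0
    obtain ⟨ζ, hzζ, hxζ, hyζ⟩ :
        ∃ ζ, (∀ i : Fin r, Ω ![z i, ζ] = 0) ∧ Ω ![x, ζ] ≠ 0 ∧ Ω ![y, ζ] ≠ 0 := by
      by_cases h1 : Ω ![y, ζ₁] = 0
      · by_cases h2 : Ω ![x, ζ₂] = 0
        · refine ⟨ζ₁ + ζ₂, fun i => ?_, ?_, ?_⟩
          · rw [om_add_right, hz1, hz2, add_zero]
          · rw [om_add_right, hx1, h2, add_zero]; norm_num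
          · rw [om_add_right, h1, hy2, zero_add]; norm_num
        · exact ⟨ζ₂, hz2, h2, by rw [hy2]; norm_num⟩
      · exact ⟨ζ₁, hz1, by rw [hx1]; norm_num, h1⟩
    refine ⟨[(ζ - x, (Ω ![x, ζ])⁻¹), (y - ζ, (Ω ![ζ, y])⁻¹)], fun i => ?_, ?_⟩
    · rw [wd_cons, tv_fix Ω _ _ _ (by rw [om_sub_right, hzζ, hzx, sub_zero]),
        wd_cons, tv_fix Ω _ _ _ (by rw [om_sub_right, hzy, hzζ, sub_zero]), wd_nil]
      rfl
    · have hζy : Ω ![ζ, y] ≠ 0 := by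
        rw [om_skew]; simpa using hyζ
      rw [wd_cons, tv_hit Ω x ζ hxζ, wd_cons, tv_hit Ω ζ y hζy, wd_nil]
      rfl
  · by_cases hxy0 : x = y
    · exact ⟨[], fun i => rfl, by rw [wd_nil]; exact congrArg _ hxy0⟩
    · refine ⟨[(y - x, (Ω ![x, y])⁻¹)], fun i => ?_, ?_⟩
      · rw [wd_cons, tv_fix Ω _ _ _ (by rw [om_sub_right, hzy, hzx, sub_zero]), wd_nil]
        rfl
      · rw [wd_cons, tv_hit Ω x y hxy, wd_nil]
        rfl

theorem word_trans [FiniteDimensional ℝ V] (hnd : ∀ x : V, (∀ y, Ω ![x, y] = 0) → x = 0)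
    {k : ℕ} (u w : Fin k → V) (hu : IsIso Ω u) (hw : IsIso Ω w)
    (hui : LinearIndependent ℝ u) (hwi : LinearIndependent ℝ w) :
    ∃ W : List (V × ℝ), ⇑(wd Ω W) ∘ u = w := by
  suffices h : ∀ j : ℕ, j ≤ k → ∃ W, ∀ i : Fin k, (i : ℕ) < j → wd Ω W (u i) = w i by
    obtain ⟨W, hW⟩ := h k le_rfl
    exact ⟨W, funext fun i => hW i i.isLt⟩
  intro j hjk
  induction j with
  | zero => exact ⟨[], fun i hi => absurd hi (Nat.not_lt_zero _)⟩
  | succ j ihj =>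
    obtain ⟨W, hW⟩ := ihj (Nat.le_of_succ_le hjk)
    have hjk' : j < k := hjk
    set u' : Fin k → V := ⇑(wd Ω W) ∘ u with hu'def
    have hu'iso : IsIso Ω u' := IsIso.map Ω (wd_om Ω W) hu
    have hu'li : LinearIndependent ℝ u' :=
      hui.map' (wd Ω W).toLinearMap (LinearMap.ker_eq_bot_of_injective (wd Ω W).injective)
    -- the embedding of the first j+1 indices
    set g : Fin (j+1) → Fin k := fun i => ⟨(i : ℕ), lt_of_lt_of_le i.isLt hjk⟩ with hgdef
    have hginj : Function.Injective g := by
      intro i1 i2 h12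
      have : (i1 : ℕ) = (i2 : ℕ) := congrArg (fun (t : Fin k) => (t : ℕ)) h12
      exact Fin.ext this
    set z : Fin j → V := fun i => w ⟨(i : ℕ), lt_trans i.isLt hjk'⟩ with hzdef
    set jj : Fin k := ⟨j, hjk'⟩ with hjjdef
    have hagree : ∀ i : Fin j, z i = u' ⟨(i : ℕ), lt_trans i.isLt hjk'⟩ := by
      intro i
      exact (hW _ i.isLt).symm
    have hsnocx : (Fin.snoc z (u' jj) : Fin (j+1) → V) = u' ∘ g := by
      funext i
      rcases Fin.eq_castSucc_or_eq_last i with ⟨i', rfl⟩ | rfl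
      · rw [Fin.snoc_castSucc, hagree i']
        rfl
      · rw [Fin.snoc_last]
        rfl
    have hsnocy : (Fin.snoc z (w jj) : Fin (j+1) → V) = w ∘ g := by
      funext i
      rcases Fin.eq_castSucc_or_eq_last i with ⟨i', rfl⟩ | rfl
      · rw [Fin.snoc_castSucc]
        rfl
      · rw [Fin.snoc_last]
        rfl
    have hlx : LinearIndependent ℝ (Fin.snoc z (u' jj) : Fin (j+1) → V) := by
      rw [hsnocx]; exact hu'li.comp g hginj
    have hly : LinearIndependent ℝ (Fin.snoc z (w jj) : Fin (j+1) → V) := by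
      rw [hsnocy]; exact hwi.comp g hginj
    have hzx : ∀ i : Fin j, Ω ![z i, u' jj] = 0 := by
      intro i; rw [hagree i]; exact hu'iso _ _
    have hzy : ∀ i : Fin j, Ω ![z i, w jj] = 0 := by
      intro i; exact hw _ _
    obtain ⟨W₂, hfix, hmove⟩ := move1 Ω hnd z (u' jj) (w jj) hzx hzy hlx hly
    refine ⟨W ++ W₂, fun i hi => ?_⟩
    rw [wd_append]
    rcases Nat.lt_or_ge (i : ℕ) j with h | h
    · have h1 : wd Ω W (u i) = z ⟨(i : ℕ), h⟩ := by
        rw [hW i h, hzdef]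
      rw [h1, hfix ⟨(i : ℕ), h⟩, hzdef]
    · have hval : (i : ℕ) = j := by omega
      have hij : i = jj := Fin.ext (by simp only [hjjdef, Fin.val_mk]; omega)
      subst hij
      exact hmove

end Witt

end EFP


namespace EFP

variable {V : Type*} [AddCommGroup V] [Module ℝ V]

section ConsLemmas

variable {r : ℕ}

lemma cons_add (ω : AlternatingMap ℝ V ℝ (Fin (r+1))) (x y : V) (w : Fin r → V) :
    ω (Fin.cons (x + y) w) = ω (Fin.cons x w) + ω (Fin.cons y w) := by
  rw [cons_eval, cons_eval, cons_eval, map_add, AlternatingMap.add_apply]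

lemma cons_cons_add_snd (ω : AlternatingMap ℝ V ℝ (Fin (r+2))) (x y z : V) (u : Fin r → V) :
    ω (Fin.cons x (Fin.cons (y + z) u)) = ω (Fin.cons x (Fin.cons y u)) + ω (Fin.cons x (Fin.cons z u)) := by
  rw [cons_eval ω x, cons_eval ω x, cons_eval ω x]
  exact cons_add (ω.curryLeft x) y z u

lemma cons_cons_one (x y : V) (u : Fin r → V) :
    (Fin.cons x (Fin.cons y u) : Fin (r+2) → V) 1 = y := by
  rw [← Fin.succ_zero_eq_one, Fin.cons_succ, Fin.cons_zero]

lemma cons_cons_diag (ω : AlternatingMap ℝ V ℝ (Fin (r+2))) (x : V) (u : Fin r → V) :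
    ω (Fin.cons x (Fin.cons x u)) = 0 := by
  apply ω.map_eq_zero_of_eq (i := 0) (j := 1)
  · rw [Fin.cons_zero, cons_cons_one]
  · exact Fin.zero_ne_one

lemma cons_cons_antisymm (ω : AlternatingMap ℝ V ℝ (Fin (r+2))) (x y : V) (u : Fin r → V) :
    ω (Fin.cons y (Fin.cons x u)) = - ω (Fin.cons x (Fin.cons y u)) := by
  have h := cons_cons_diag ω (x + y) u
  rw [cons_add, cons_cons_add_snd, cons_cons_add_snd, cons_cons_diag, cons_cons_diag] at h
  linarith

end ConsLemmas

section LemA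

variable (Ω : AlternatingMap ℝ V ℝ (Fin 2)) {n : ℕ}

/-- the tuple of vectors selected by `s` from the system `(e, f)` -/
def vecOf (e f : Fin n → V) {r : ℕ} (s : Fin r → (Fin n ⊕ Fin n)) : Fin r → V :=
  fun i => Sum.elim e f (s i)

lemma vecOf_cons (e f : Fin n → V) {r : ℕ} (a : Fin n ⊕ Fin n) (s : Fin r → (Fin n ⊕ Fin n)) :
    vecOf e f (Fin.cons a s : Fin (r+1) → (Fin n ⊕ Fin n)) = Fin.cons (Sum.elim e f a) (vecOf e f s) := by
  funext i
  refine Fin.cases ?_ ?_ i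
  · rw [vecOf, Fin.cons_zero, Fin.cons_zero]
  · intro i'
    rw [vecOf, Fin.cons_succ, Fin.cons_succ]
    rfl

/-- relations making `(e, f)` a symplectic system -/
def SysRel (e f : Fin n → V) : Prop :=
  (∀ i j, Ω ![e i, e j] = 0) ∧ (∀ i j, Ω ![f i, f j] = 0) ∧
    (∀ i j, Ω ![e i, f j] = if i = j then (1:ℝ) else 0)

/-- indices appearing as a conjugate pair in `s` -/
def pairSet {r : ℕ} (s : Fin r → (Fin n ⊕ Fin n)) : Finset (Fin n) :=
  Finset.univ.filter fun m => (∃ i, s i = Sum.inl m) ∧ (∃ i, s i = Sum.inr m)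

lemma mem_pairSet {r : ℕ} {s : Fin r → (Fin n ⊕ Fin n)} {m₀ : Fin n} :
    m₀ ∈ pairSet s ↔ (∃ i, s i = Sum.inl m₀) ∧ (∃ i, s i = Sum.inr m₀) := by
  rw [pairSet, Finset.mem_filter]
  simp

/-- index `l` is not occupied by the selector `s` -/
def NotOcc {r : ℕ} (s : Fin r → (Fin n ⊕ Fin n)) (l : Fin n) : Prop :=
  ∀ i, s i ≠ Sum.inl l ∧ s i ≠ Sum.inr l

lemma exists_cons {r : ℕ} {α : Type*} (a : α) (s : Fin r → α) (x : α) :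
    (∃ i, (Fin.cons a s : Fin (r+1) → α) i = x) ↔ a = x ∨ ∃ i, s i = x := by
  constructor
  · rintro ⟨i, hi⟩
    rcases Fin.eq_zero_or_eq_succ i with rfl | ⟨i', rfl⟩
    · left; rwa [Fin.cons_zero] at hi
    · right; exact ⟨i', by rwa [Fin.cons_succ] at hi⟩
  · rintro (rfl | ⟨i, hi⟩)
    · exact ⟨0, Fin.cons_zero _ _⟩
    · exact ⟨i.succ, by rwa [Fin.cons_succ]⟩

lemma mem_pairSet_cons_cons {r : ℕ} {s : Fin r → (Fin n ⊕ Fin n)} {a b : Fin n ⊕ Fin n} {m₀ : Fin n} :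
    m₀ ∈ pairSet (Fin.cons a (Fin.cons b s) : Fin (r+2) → (Fin n ⊕ Fin n)) ↔
      ((a = Sum.inl m₀ ∨ b = Sum.inl m₀ ∨ ∃ i, s i = Sum.inl m₀) ∧
       (a = Sum.inr m₀ ∨ b = Sum.inr m₀ ∨ ∃ i, s i = Sum.inr m₀)) := by
  rw [mem_pairSet, exists_cons, exists_cons, exists_cons, exists_cons]

lemma pairSet_cons_ll {r : ℕ} {s : Fin r → (Fin n ⊕ Fin n)} {l l' : Fin n}
    (hl : NotOcc s l) (hl' : NotOcc s l') :
    pairSet (Fin.cons (Sum.inl l) (Fin.cons (Sum.inl l') s) : Fin (r+2) → (Fin n ⊕ Fin n)) = pairSet s := by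
  ext m₀
  rw [mem_pairSet_cons_cons, mem_pairSet]
  constructor
  · rintro ⟨h1, (h | h | h)⟩
    · exact absurd h (by simp)
    · exact absurd h (by simp)
    · -- m₀ occupied via inr in s, so m₀ ≠ l, l'
      obtain ⟨i, hi⟩ := h
      have hml : m₀ ≠ l := fun hh => (hl i).2 (by rw [hi, hh])
      have hml' : m₀ ≠ l' := fun hh => (hl' i).2 (by rw [hi, hh])
      refine ⟨?_, ⟨i, hi⟩⟩
      rcases h1 with h1 | h1 | h1
      · exact absurd (Sum.inl.inj h1) (Ne.symm hml)
      · exact absurd (Sum.inl.inj h1) (Ne.symm hml')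
      · exact h1
  · rintro ⟨h1, h2⟩
    exact ⟨Or.inr (Or.inr h1), Or.inr (Or.inr h2)⟩

lemma pairSet_cons_rr {r : ℕ} {s : Fin r → (Fin n ⊕ Fin n)} {l l' : Fin n}
    (hl : NotOcc s l) (hl' : NotOcc s l') :
    pairSet (Fin.cons (Sum.inr l') (Fin.cons (Sum.inr l) s) : Fin (r+2) → (Fin n ⊕ Fin n)) = pairSet s := by
  ext m₀
  rw [mem_pairSet_cons_cons, mem_pairSet]
  constructor
  · rintro ⟨(h | h | h), h2⟩
    · exact absurd h (by simp)
    · exact absurd h (by simp)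
    · obtain ⟨i, hi⟩ := h
      have hml : m₀ ≠ l := fun hh => (hl i).1 (by rw [hi, hh])
      have hml' : m₀ ≠ l' := fun hh => (hl' i).1 (by rw [hi, hh])
      refine ⟨⟨i, hi⟩, ?_⟩
      rcases h2 with h2 | h2 | h2
      · exact absurd (Sum.inr.inj h2) (Ne.symm hml')
      · exact absurd (Sum.inr.inj h2) (Ne.symm hml)
      · exact h2
  · rintro ⟨h1, h2⟩
    exact ⟨Or.inr (Or.inr h1), Or.inr (Or.inr h2)⟩

lemma pairSet_cons_pair_card {r : ℕ} {s : Fin r → (Fin n ⊕ Fin n)} {l : Fin n}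
    (hl : NotOcc s l) :
    (pairSet s).card + 1 ≤
      (pairSet (Fin.cons (Sum.inl l) (Fin.cons (Sum.inr l) s) : Fin (r+2) → (Fin n ⊕ Fin n))).card := by
  classical
  set S := pairSet (Fin.cons (Sum.inl l) (Fin.cons (Sum.inr l) s) : Fin (r+2) → (Fin n ⊕ Fin n)) with hS
  have hlS : l ∈ S := by
    rw [hS, mem_pairSet_cons_cons]
    exact ⟨Or.inl rfl, Or.inr (Or.inl rfl)⟩
  have hsub : pairSet s ⊆ S.erase l := by
    intro m₀ hm₀
    rw [mem_pairSet] at hm₀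
    have hml : m₀ ≠ l := by
      rintro rfl
      obtain ⟨i, hi⟩ := hm₀.1
      exact (hl i).1 hi
    refine Finset.mem_erase.mpr ⟨hml, ?_⟩
    rw [hS, mem_pairSet_cons_cons]
    exact ⟨Or.inr (Or.inr hm₀.1), Or.inr (Or.inr hm₀.2)⟩
  calc (pairSet s).card + 1 ≤ (S.erase l).card + 1 := by
        exact Nat.add_le_add_right (Finset.card_le_card hsub) 1
    _ = S.card := by
        rw [Finset.card_erase_of_mem hlS]
        exact Nat.succ_pred_eq_of_pos (Finset.card_pos.mpr ⟨l, hlS⟩)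

/-- the set of occupied indices -/
noncomputable def occSet {r : ℕ} (s : Fin r → (Fin n ⊕ Fin n)) : Finset (Fin n) :=
  @Finset.filter _ (fun m => ¬ NotOcc s m) (Classical.decPred _) Finset.univ

lemma mem_occSet {r : ℕ} {s : Fin r → (Fin n ⊕ Fin n)} {m : Fin n} :
    m ∈ occSet s ↔ ¬ NotOcc s m := by
  rw [occSet, @Finset.mem_filter _ _ (Classical.decPred _)]
  simp

/-- bound on the number of occupied indices -/
lemma occ_card_le {r : ℕ} (s : Fin r → (Fin n ⊕ Fin n)) :
    (occSet s).card ≤ r := by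
  classical
  have hsub : occSet s ⊆ Finset.univ.image (fun i => Sum.elim id id (s i)) := by
    intro m hm
    rw [mem_occSet, NotOcc] at hm
    push_neg at hm
    obtain ⟨i, hi⟩ := hm
    rcases Classical.em (s i = Sum.inl m) with h | h
    · refine Finset.mem_image.mpr ⟨i, Finset.mem_univ i, ?_⟩
      rw [h]; rfl
    · refine Finset.mem_image.mpr ⟨i, Finset.mem_univ i, ?_⟩
      rw [hi h]; rfl
  calc _ ≤ (Finset.univ.image (fun i => Sum.elim id id (s i))).card := Finset.card_le_card hsub
    _ ≤ (Finset.univ : Finset (Fin r)).card := Finset.card_image_le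
    _ = r := by simp

end LemA

end EFP


namespace EFP

variable {V : Type*} [AddCommGroup V] [Module ℝ V]

section Core

variable (Ω : AlternatingMap ℝ V ℝ (Fin 2)) {n : ℕ}

lemma pairSet_comp_perm {r : ℕ} (s : Fin r → (Fin n ⊕ Fin n)) (σ : Equiv.Perm (Fin r)) :
    pairSet (s ∘ σ) = pairSet s := by
  ext m₁
  rw [mem_pairSet, mem_pairSet]
  have h : ∀ x : Fin n ⊕ Fin n, (∃ i, s (σ i) = x) ↔ ∃ i, s i = x := fun x =>
    (σ.surjective.exists (p := fun i => s i = x)).symm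
  constructor
  · rintro ⟨h1, h2⟩
    exact ⟨(h _).mp h1, (h _).mp h2⟩
  · rintro ⟨h1, h2⟩
    exact ⟨(h _).mpr h1, (h _).mpr h2⟩

lemma sysrel_update {e f : Fin n → V} (hsys : SysRel Ω e f) {l l' : Fin n} (hll' : l ≠ l') :
    SysRel Ω (Function.update (Function.update e l (e l + f l')) l' (e l' + f l)) f := by
  classical
  obtain ⟨hee, hff, hef⟩ := hsys
  set e' := Function.update (Function.update e l (e l + f l')) l' (e l' + f l) with he'
  have hvl : e' l = e l + f l' := by
    rw [he', Function.update_of_ne hll', Function.update_self]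
  have hvl' : e' l' = e l' + f l := by
    rw [he', Function.update_self]
  have hoth : ∀ i, i ≠ l → i ≠ l' → e' i = e i := fun i h1 h2 => by
    rw [he', Function.update_of_ne h2, Function.update_of_ne h1]
  have hfe : ∀ i j, Ω ![f i, e j] = if j = i then (-1:ℝ) else 0 := by
    intro i j
    rw [om_skew, hef]
    by_cases h : j = i <;> simp [h]
  refine ⟨?_, hff, ?_⟩
  · intro i j
    rcases eq_or_ne i j with rfl | hij
    · exact om_self Ω _
    rcases eq_or_ne i l with rfl | hil
    · rcases eq_or_ne j l' with rfl | hjl'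
      · rw [hvl, hvl', om_add_left, om_add_right, om_add_right, hee, hef, hfe, hff]
        simp [hll']
      · rw [hvl, hoth j (Ne.symm hij) hjl', om_add_left, hee, hfe]
        simp [hjl', Ne.symm hjl']
    · rcases eq_or_ne i l' with rfl | hil'
      · rcases eq_or_ne j l with rfl | hjl
        · rw [hvl', hvl, om_add_left, om_add_right, om_add_right, hee, hef, hfe, hff]
          simp [Ne.symm hll']
        · rw [hvl', hoth j hjl (Ne.symm hij), om_add_left, hee, hfe]
          simp [hjl, Ne.symm hjl]
      · rcases eq_or_ne j l with rfl | hjl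
        · rw [hoth i hil hil', hvl, om_add_right, hee, hef]
          simp [hil']
        · rcases eq_or_ne j l' with rfl | hjl'
          · rw [hoth i hil hil', hvl', om_add_right, hee, hef]
            simp [hil]
          · rw [hoth i hil hil', hoth j hjl hjl', hee]
  · intro i j
    rcases eq_or_ne i l with rfl | hil
    · rw [hvl, om_add_left, hef, hff, add_zero]
    · rcases eq_or_ne i l' with rfl | hil'
      · rw [hvl', om_add_left, hef, hff, add_zero]
      · rw [hoth i hil hil', hef]

lemma h3_update {m : ℕ} {ω₂ : AlternatingMap ℝ V ℝ (Fin (m+2))} {e f : Fin n → V}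
    (h3 : ∀ u : Fin m → V, ∑ j, ω₂ (Fin.cons (e j) (Fin.cons (f j) u)) = 0)
    {l l' : Fin n} (hll' : l ≠ l') :
    ∀ u : Fin m → V, ∑ j, ω₂ (Fin.cons
      ((Function.update (Function.update e l (e l + f l')) l' (e l' + f l)) j)
      (Fin.cons (f j) u)) = 0 := by
  classical
  intro u
  set e' := Function.update (Function.update e l (e l + f l')) l' (e l' + f l) with he'
  have hvl : e' l = e l + f l' := by
    rw [he', Function.update_of_ne hll', Function.update_self]
  have hvl' : e' l' = e l' + f l := by
    rw [he', Function.update_self]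
  have hoth : ∀ i, i ≠ l → i ≠ l' → e' i = e i := fun i h1 h2 => by
    rw [he', Function.update_of_ne h2, Function.update_of_ne h1]
  set F' : Fin n → ℝ := fun j => ω₂ (Fin.cons (e' j) (Fin.cons (f j) u)) with hF'
  set F : Fin n → ℝ := fun j => ω₂ (Fin.cons (e j) (Fin.cons (f j) u)) with hF
  have hl'mem : l' ∈ Finset.univ.erase l :=
    Finset.mem_erase.mpr ⟨Ne.symm hll', Finset.mem_univ _⟩
  have hsum : ∑ j, F' j = ∑ j, F j := by
    rw [← Finset.add_sum_erase _ F' (Finset.mem_univ l),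
      ← Finset.add_sum_erase _ F (Finset.mem_univ l),
      ← Finset.add_sum_erase _ F' hl'mem, ← Finset.add_sum_erase _ F hl'mem]
    have hrest : ∑ j ∈ (Finset.univ.erase l).erase l', F' j
        = ∑ j ∈ (Finset.univ.erase l).erase l', F j := by
      apply Finset.sum_congr rfl
      intro j hj
      obtain ⟨hjl', hj2⟩ := Finset.mem_erase.mp hj
      obtain ⟨hjl, _⟩ := Finset.mem_erase.mp hj2
      show ω₂ (Fin.cons (e' j) (Fin.cons (f j) u)) = ω₂ (Fin.cons (e j) (Fin.cons (f j) u))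
      rw [hoth j hjl hjl']
    have hFl : F' l = F l + ω₂ (Fin.cons (f l') (Fin.cons (f l) u)) := by
      show ω₂ (Fin.cons (e' l) (Fin.cons (f l) u)) = _
      rw [hvl, cons_add]
    have hFl' : F' l' = F l' + ω₂ (Fin.cons (f l) (Fin.cons (f l') u)) := by
      show ω₂ (Fin.cons (e' l') (Fin.cons (f l') u)) = _
      rw [hvl', cons_add]
    have hanti := cons_cons_antisymm ω₂ (f l') (f l) u
    rw [hrest, hFl, hFl']
    linarith
  rw [show (∑ j, ω₂ (Fin.cons (e' j) (Fin.cons (f j) u))) = ∑ j, F' j from rfl, hsum]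
  exact h3 u

theorem coreA {m : ℕ} (hmn : m + 2 ≤ n) (ω₂ : AlternatingMap ℝ V ℝ (Fin (m+2)))
    (hiso : ∀ v : Fin (m+2) → V, (∀ i j, Ω ![v i, v j] = 0) → ω₂ v = 0) :
    ∀ (p : ℕ) (e f : Fin n → V), SysRel Ω e f →
      (∀ u : Fin m → V, ∑ j, ω₂ (Fin.cons (e j) (Fin.cons (f j) u)) = 0) →
      ∀ s : Fin (m+2) → (Fin n ⊕ Fin n), (pairSet s).card ≤ p → ω₂ (vecOf e f s) = 0 := by
  classical
  intro p
  induction p with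
  | zero =>
    intro e f hsys h3 s hs
    obtain ⟨hee, hff, hef⟩ := hsys
    have hempty : pairSet s = ∅ := Finset.card_eq_zero.mp (Nat.le_zero.mp hs)
    apply hiso
    intro i j
    rcases eq_or_ne i j with rfl | hij
    · exact om_self Ω _
    show Ω ![Sum.elim e f (s i), Sum.elim e f (s j)] = 0
    rcases hsi : s i with a | a <;> rcases hsj : s j with b | b
    · rw [Sum.elim_inl, Sum.elim_inl, hee]
    · rw [Sum.elim_inl, Sum.elim_inr, hef]
      rcases eq_or_ne a b with rfl | hab
      · exfalso
        have : a ∈ pairSet s := mem_pairSet.mpr ⟨⟨i, hsi⟩, ⟨j, hsj⟩⟩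
        rw [hempty] at this
        exact absurd this (Finset.notMem_empty _)
      · rw [if_neg hab]
    · rw [Sum.elim_inr, Sum.elim_inl, om_skew, hef]
      rcases eq_or_ne b a with rfl | hab
      · exfalso
        have : b ∈ pairSet s := mem_pairSet.mpr ⟨⟨j, hsj⟩, ⟨i, hsi⟩⟩
        rw [hempty] at this
        exact absurd this (Finset.notMem_empty _)
      · rw [if_neg hab, neg_zero]
    · rw [Sum.elim_inr, Sum.elim_inr, hff]
  | succ p ih =>
    intro e f hsys h3 s hs
    by_cases hinj : Function.Injective s
    swap
    · rw [Function.not_injective_iff] at hinj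
      obtain ⟨i, j, hij, hne⟩ := hinj
      exact ω₂.map_eq_zero_of_eq _ (show Sum.elim e f (s i) = Sum.elim e f (s j) by rw [hij]) hne
    rcases Nat.lt_or_ge (pairSet s).card (p+1) with hlt | hge
    · exact ih e f hsys h3 s (Nat.lt_succ_iff.mp hlt)
    have hpos : 0 < (pairSet s).card := by omega
    obtain ⟨m₀, hm₀⟩ := Finset.card_pos.mp hpos
    rw [mem_pairSet] at hm₀
    obtain ⟨⟨i₀, hi₀⟩, ⟨j₀, hj₀⟩⟩ := hm₀
    have hi₀j₀ : i₀ ≠ j₀ := by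
      intro h
      rw [h, hj₀] at hi₀
      exact absurd hi₀ (by simp)
    -- build the permutation moving the pair to the front
    set σ1 := Equiv.swap (0 : Fin (m+2)) i₀ with hσ1
    set j₁ := σ1 j₀ with hj₁
    have hj₁0 : j₁ ≠ 0 := by
      rw [hj₁, hσ1]
      intro h
      have h2 : σ1 j₀ = σ1 i₀ := by
        rw [hσ1, Equiv.swap_apply_right, ← hσ1, h]
      exact hi₀j₀ (σ1.injective h2).symm
    set σ : Equiv.Perm (Fin (m+2)) := σ1 * (Equiv.swap (1 : Fin (m+2)) j₁) with hσ
    have hσ0 : σ 0 = i₀ := by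
      rw [hσ, Equiv.Perm.mul_apply,
        Equiv.swap_apply_of_ne_of_ne Fin.zero_ne_one (Ne.symm hj₁0), hσ1,
        Equiv.swap_apply_left]
    have hσ1app : σ 1 = j₀ := by
      rw [hσ, Equiv.Perm.mul_apply, Equiv.swap_apply_left, hj₁, hσ1, Equiv.swap_apply_self]
    set srest : Fin m → (Fin n ⊕ Fin n) := fun i => s (σ i.succ.succ) with hsrest
    have hdecomp : s ∘ σ = Fin.cons (Sum.inl m₀)
        (Fin.cons (Sum.inr m₀) srest : Fin (m+1) → (Fin n ⊕ Fin n)) := by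
      funext i
      rcases Fin.eq_zero_or_eq_succ i with rfl | ⟨i', rfl⟩
      · rw [Function.comp_apply, hσ0, hi₀, Fin.cons_zero]
      rcases Fin.eq_zero_or_eq_succ i' with rfl | ⟨i'', rfl⟩
      · rw [Function.comp_apply, Fin.succ_zero_eq_one, hσ1app, hj₀, ← Fin.succ_zero_eq_one,
          Fin.cons_succ, Fin.cons_zero]
      · rw [Function.comp_apply, Fin.cons_succ, Fin.cons_succ]
    have hm₀occ : NotOcc srest m₀ := by
      intro i
      constructor
      · intro h
        have h2 : s (σ i.succ.succ) = s (σ 0) := by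
          rw [hσ0, hi₀]; exact h
        have h3 := σ.injective (hinj h2)
        exact (Fin.succ_ne_zero _) h3
      · intro h
        have h2 : s (σ i.succ.succ) = s (σ 1) := by
          rw [hσ1app, hj₀]; exact h
        have h3 := σ.injective (hinj h2)
        rw [← Fin.succ_zero_eq_one] at h3
        exact (Fin.succ_ne_zero _) (Fin.succ_injective _ h3)
    have hcard : (pairSet srest).card ≤ p := by
      have h1 := pairSet_cons_pair_card (s := srest) hm₀occ
      have h2 : pairSet (s ∘ σ) = pairSet s := pairSet_comp_perm s σ
      rw [hdecomp] at h2
      rw [h2] at h1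
      omega
    -- trading between unoccupied indices
    have trade : ∀ (e f : Fin n → V), SysRel Ω e f →
        (∀ u : Fin m → V, ∑ j, ω₂ (Fin.cons (e j) (Fin.cons (f j) u)) = 0) →
        ∀ l l' : Fin n, l ≠ l' → NotOcc srest l → NotOcc srest l' →
          ω₂ (Fin.cons (e l) (Fin.cons (f l) (vecOf e f srest)))
            = ω₂ (Fin.cons (e l') (Fin.cons (f l') (vecOf e f srest))) := by
      intro e f hsys h3 l l' hll' hl hl'
      have hexp : ω₂ (Fin.cons (e l + f l') (Fin.cons (e l' + f l) (vecOf e f srest)))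
          = ω₂ (Fin.cons (e l) (Fin.cons (e l') (vecOf e f srest)))
            + ω₂ (Fin.cons (e l) (Fin.cons (f l) (vecOf e f srest)))
            + ω₂ (Fin.cons (f l') (Fin.cons (e l') (vecOf e f srest)))
            + ω₂ (Fin.cons (f l') (Fin.cons (f l) (vecOf e f srest))) := by
        rw [cons_add, cons_cons_add_snd, cons_cons_add_snd]
        ring
      have h1 : ω₂ (Fin.cons (e l) (Fin.cons (e l') (vecOf e f srest))) = 0 := by
        have hcall := ih e f hsys h3
          (Fin.cons (Sum.inl l) (Fin.cons (Sum.inl l') srest) : Fin (m+2) → (Fin n ⊕ Fin n))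
          (by rw [pairSet_cons_ll hl hl']; exact hcard)
        rw [vecOf_cons, vecOf_cons] at hcall
        simpa using hcall
      have h2 : ω₂ (Fin.cons (f l') (Fin.cons (f l) (vecOf e f srest))) = 0 := by
        have hcall := ih e f hsys h3
          (Fin.cons (Sum.inr l') (Fin.cons (Sum.inr l) srest) : Fin (m+2) → (Fin n ⊕ Fin n))
          (by rw [pairSet_cons_rr hl hl']; exact hcard)
        rw [vecOf_cons, vecOf_cons] at hcall
        simpa using hcall
      have h0 : ω₂ (Fin.cons (e l + f l') (Fin.cons (e l' + f l) (vecOf e f srest))) = 0 := by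
        have hrel' := sysrel_update Ω hsys hll'
        have h3' := h3_update h3 hll'
        set e' := Function.update (Function.update e l (e l + f l')) l' (e l' + f l) with he'
        have hvl : e' l = e l + f l' := by
          rw [he', Function.update_of_ne hll', Function.update_self]
        have hvl' : e' l' = e l' + f l := by
          rw [he', Function.update_self]
        have hveq : vecOf e' f srest = vecOf e f srest := by
          funext i
          rcases hsi : srest i with a | a
          · show Sum.elim e' f (srest i) = Sum.elim e f (srest i)
            rw [hsi, Sum.elim_inl, Sum.elim_inl]
            have hal : a ≠ l := fun hh => (hl i).1 (by rw [hsi, hh])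
            have hal' : a ≠ l' := fun hh => (hl' i).1 (by rw [hsi, hh])
            rw [he', Function.update_of_ne hal', Function.update_of_ne hal]
          · show Sum.elim e' f (srest i) = Sum.elim e f (srest i)
            rw [hsi, Sum.elim_inr, Sum.elim_inr]
        have hcall := ih e' f hrel' h3'
          (Fin.cons (Sum.inl l) (Fin.cons (Sum.inl l') srest) : Fin (m+2) → (Fin n ⊕ Fin n))
          (by rw [pairSet_cons_ll hl hl']; exact hcard)
        rw [vecOf_cons, vecOf_cons] at hcall
        simp only [Sum.elim_inl] at hcall
        rw [hvl, hvl', hveq] at hcall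
        exact hcall
      have hanti := cons_cons_antisymm ω₂ (e l') (f l') (vecOf e f srest)
      linarith [hexp, h1, h2, h0, hanti]
    -- counting argument
    have hcount : ω₂ (Fin.cons (e m₀) (Fin.cons (f m₀) (vecOf e f srest))) = 0 := by
      have h3u := h3 (vecOf e f srest)
      set G : Fin n → ℝ := fun j => ω₂ (Fin.cons (e j) (Fin.cons (f j) (vecOf e f srest)))
        with hG
      have hocc0 : ∀ j ∈ occSet srest, G j = 0 := by
        intro j hj
        rw [mem_occSet, NotOcc] at hj
        push_neg at hj
        obtain ⟨i, hi⟩ := hj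
        rcases Classical.em (srest i = Sum.inl j) with h | h
        · apply ω₂.map_eq_zero_of_eq (i := (0 : Fin (m+2))) (j := i.succ.succ)
          · rw [Fin.cons_zero, Fin.cons_succ, Fin.cons_succ]
            show e j = Sum.elim e f (srest i)
            rw [h, Sum.elim_inl]
          · exact (Fin.succ_ne_zero _).symm
        · have h' := hi h
          apply ω₂.map_eq_zero_of_eq (i := (1 : Fin (m+2))) (j := i.succ.succ)
          · rw [cons_cons_one, Fin.cons_succ, Fin.cons_succ]
            show f j = Sum.elim e f (srest i)
            rw [h', Sum.elim_inr]
          · intro hcontra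
            rw [← Fin.succ_zero_eq_one] at hcontra
            exact (Fin.succ_ne_zero i) (Fin.succ_injective _ hcontra).symm
      have hconst : ∀ j ∈ Finset.univ \ occSet srest, G j = G m₀ := by
        intro j hj
        have hjnot : NotOcc srest j := by
          have h1 := (Finset.mem_sdiff.mp hj).2
          rw [mem_occSet] at h1
          exact not_not.mp h1
        rcases eq_or_ne j m₀ with rfl | hjm
        · rfl
        · exact trade e f hsys h3 j m₀ hjm hjnot hm₀occ
      have hzero : ∑ j ∈ occSet srest, G j = 0 := Finset.sum_eq_zero hocc0
      have hcc : ∑ j ∈ Finset.univ \ occSet srest, G j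
          = ((Finset.univ \ occSet srest).card : ℝ) * G m₀ := by
        rw [Finset.sum_congr rfl hconst, Finset.sum_const, nsmul_eq_mul]
      have hcardpos : 0 < (Finset.univ \ occSet srest).card := by
        have h1 := occ_card_le srest
        have h2 : (Finset.univ \ occSet srest).card = n - (occSet srest).card := by
          rw [Finset.card_sdiff_of_subset (Finset.subset_univ _), Finset.card_univ, Fintype.card_fin]
        omega
      have htot : (0:ℝ) = ∑ j ∈ Finset.univ \ occSet srest, G j + ∑ j ∈ occSet srest, G j := by
        rw [Finset.sum_sdiff (Finset.subset_univ _)]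
        exact h3u.symm
      rw [hzero, add_zero, hcc] at htot
      have hne : ((Finset.univ \ occSet srest).card : ℝ) ≠ 0 := by
        have := hcardpos.ne'
        exact_mod_cast this
      have := mul_eq_zero.mp htot.symm
      rcases this with h | h
      · exact absurd h hne
      · exact h
    -- conclude via the permutation
    have h0 : Equiv.Perm.sign σ • ω₂ (vecOf e f s) = 0 := by
      rw [← ω₂.map_perm (vecOf e f s) σ]
      have hvcomp : vecOf e f s ∘ σ = vecOf e f (s ∘ σ) := rfl
      have hdec2 : vecOf e f (s ∘ σ)
          = Fin.cons (e m₀) (Fin.cons (f m₀) (vecOf e f srest)) := by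
        rw [hdecomp, vecOf_cons, vecOf_cons]
        simp only [Sum.elim_inl, Sum.elim_inr]
      rw [hvcomp, hdec2]
      exact hcount
    rcases Int.units_eq_one_or (Equiv.Perm.sign σ) with hσs | hσs
    · rwa [hσs, one_smul] at h0
    · rw [hσs, Units.neg_smul, one_smul, neg_eq_zero] at h0
      exact h0

end Core

end EFP


namespace EFP

variable {V : Type*} [AddCommGroup V] [Module ℝ V]

section Glue

variable (Ω : AlternatingMap ℝ V ℝ (Fin 2)) {n : ℕ}

lemma curry2_eval {m : ℕ} (α : AlternatingMap ℝ V ℝ (Fin (m+2))) (x y : V) (u : Fin m → V) :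
    ((α.curryLeft x).curryLeft y) u = α (Fin.cons x (Fin.cons y u)) := rfl

lemma nondeg (b : Module.Basis (Fin n ⊕ Fin n) ℝ V)
    (hee : ∀ i j, Ω ![b (Sum.inl i), b (Sum.inl j)] = 0)
    (hff : ∀ i j, Ω ![b (Sum.inr i), b (Sum.inr j)] = 0)
    (hef : ∀ i j, Ω ![b (Sum.inl i), b (Sum.inr j)] = if i = j then 1 else 0) :
    ∀ x : V, (∀ y, Ω ![x, y] = 0) → x = 0 := by
  classical
  intro x hx
  have key : ∀ y : V, ((om2 Ω).flip y) x
      = ∑ s : Fin n ⊕ Fin n, b.repr x s * Ω ![b s, y] := by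
    intro y
    conv_lhs => rw [← b.sum_repr x]
    rw [map_sum]
    apply Finset.sum_congr rfl
    intro s _
    rw [map_smul]
    rfl
  have hrepr : ∀ s, b.repr x s = 0 := by
    intro s
    cases s with
    | inl i =>
      have h := hx (b (Sum.inr i))
      have h2 := key (b (Sum.inr i))
      have h3 : ((om2 Ω).flip (b (Sum.inr i))) x = Ω ![x, b (Sum.inr i)] := rfl
      rw [h3, h] at h2
      rw [Finset.sum_eq_single (Sum.inl i)] at h2
      · have h4 : Ω ![b (Sum.inl i), b (Sum.inr i)] = 1 := by rw [hef]; simp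
        rw [h4, mul_one] at h2
        exact h2.symm
      · intro s _ hs
        cases s with
        | inl i' =>
          have hii : i' ≠ i := fun hh => hs (by rw [hh])
          rw [hef, if_neg hii, mul_zero]
        | inr i' => rw [hff, mul_zero]
      · intro hmem
        exact absurd (Finset.mem_univ _) hmem
    | inr i =>
      have h := hx (b (Sum.inl i))
      have h2 := key (b (Sum.inl i))
      have h3 : ((om2 Ω).flip (b (Sum.inl i))) x = Ω ![x, b (Sum.inl i)] := rfl
      rw [h3, h] at h2
      rw [Finset.sum_eq_single (Sum.inr i)] at h2
      · have h4 : Ω ![b (Sum.inr i), b (Sum.inl i)] = -1 := by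
          rw [om_skew, hef]; simp
        rw [h4] at h2
        linarith [h2]
      · intro s _ hs
        cases s with
        | inl i' => rw [hee, mul_zero]
        | inr i' =>
          have hii : i' ≠ i := fun hh => hs (by rw [hh])
          rw [om_skew, hef, if_neg (fun hh : i = i' => hii hh.symm)]
          simp
      · intro hmem
        exact absurd (Finset.mem_univ _) hmem
  have : b.repr x = 0 := Finsupp.ext hrepr
  exact b.repr.map_eq_zero_iff.mp this

lemma vanish_span {k : ℕ} (ω : AlternatingMap ℝ V ℝ (Fin k)) (v : Fin k → V)
    (li : LinearIndependent ℝ v) (h0 : ω v = 0) :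
    ∀ w : Fin k → V, (∀ i, w i ∈ Submodule.span ℝ (Set.range v)) → ω w = 0 := by
  classical
  intro w hw
  set L := Submodule.span ℝ (Set.range v) with hL
  set ωL : AlternatingMap ℝ L ℝ (Fin k) := ω.compLinearMap L.subtype with hωL
  have hval : ωL (Module.Basis.span li) = 0 := by
    rw [hωL, AlternatingMap.compLinearMap_apply]
    have hvv : (fun i => (L.subtype) ((Module.Basis.span li) i)) = v := funext fun i => Module.Basis.coe_span_apply li i
    rw [hvv]
    exact h0
  have hz : ωL = 0 := by
    rw [ωL.eq_smul_basis_det (Module.Basis.span li), hval, zero_smul]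
  have hev : ω w = ωL (fun i => ⟨w i, hw i⟩) := by
    rw [hωL, AlternatingMap.compLinearMap_apply]
    rfl
  rw [hev, hz, AlternatingMap.zero_apply]

theorem lemA {k : ℕ} (hk : k ≤ n) (b : Module.Basis (Fin n ⊕ Fin n) ℝ V)
    (hee : ∀ i j, Ω ![b (Sum.inl i), b (Sum.inl j)] = 0)
    (hff : ∀ i j, Ω ![b (Sum.inr i), b (Sum.inr j)] = 0)
    (hef : ∀ i j, Ω ![b (Sum.inl i), b (Sum.inr j)] = if i = j then 1 else 0)
    (ω : AlternatingMap ℝ V ℝ (Fin k))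
    (hiso : ∀ v : Fin k → V, (∀ i j, Ω ![v i, v j] = 0) → ω v = 0)
    (heff : IsEffective (fun j => b (Sum.inl j)) (fun j => b (Sum.inr j)) ω) :
    ω = 0 := by
  classical
  rcases Nat.lt_or_ge k 2 with hk2 | hk2
  · refine Module.Basis.ext_alternating b (fun sel _ => ?_)
    rw [AlternatingMap.zero_apply]
    apply hiso
    intro i j
    have hij : i = j := by
      have h1 := i.isLt
      have h2 := j.isLt
      exact Fin.ext (by omega)
    subst hij
    exact om_self Ω _
  · obtain ⟨m, rfl⟩ : ∃ m, k = m + 2 := ⟨k - 2, by omega⟩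
    set e : Fin n → V := fun j => b (Sum.inl j) with he
    set f : Fin n → V := fun j => b (Sum.inr j) with hf
    have hsys : SysRel Ω e f := ⟨hee, hff, hef⟩
    have h3 : ∀ u : Fin m → V, ∑ j, ω (Fin.cons (e j) (Fin.cons (f j) u)) = 0 := by
      have hc := heff m rfl
      rw [show finCongr (rfl : m + 2 = m + 2) = Equiv.refl (Fin (m+2)) from rfl,
        AlternatingMap.domDomCongr_refl] at hc
      intro u
      have h4 := congrArg (fun (g : AlternatingMap ℝ V ℝ (Fin m)) => evAt u g) hc
      simp only [sympContract] at h4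
      rw [map_sum] at h4
      have h5 : ∀ j, evAt u ((ω.curryLeft (e j)).curryLeft (f j))
          = ω (Fin.cons (e j) (Fin.cons (f j) u)) := fun j => rfl
      simp only [h5] at h4
      simpa using h4
    refine Module.Basis.ext_alternating b (fun sel _ => ?_)
    rw [AlternatingMap.zero_apply]
    have hvec : (fun i => b (sel i)) = vecOf e f sel := by
      funext i
      show b (sel i) = Sum.elim e f (sel i)
      rcases hsi : sel i with a | a
      · simp only [Sum.elim_inl, he]
      · simp only [Sum.elim_inr, hf]
    rw [hvec]
    refine coreA Ω hk ω hiso n e f hsys h3 sel ?_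
    calc (pairSet sel).card ≤ (Finset.univ : Finset (Fin n)).card := Finset.card_le_univ _
      _ = n := by simp

lemma sympContract_sub (e f : Fin n → V) {m : ℕ} (α β : AlternatingMap ℝ V ℝ (Fin (m+2))) :
    sympContract e f (α - β) = sympContract e f α - sympContract e f β := by
  unfold sympContract
  rw [← Finset.sum_sub_distrib]
  apply Finset.sum_congr rfl
  intro j _
  ext u
  rw [AlternatingMap.sub_apply, curry2_eval, curry2_eval, curry2_eval, AlternatingMap.sub_apply]

lemma sympContract_smul (e f : Fin n → V) {m : ℕ} (c : ℝ) (α : AlternatingMap ℝ V ℝ (Fin (m+2))) :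
    sympContract e f (c • α) = c • sympContract e f α := by
  unfold sympContract
  rw [Finset.smul_sum]
  apply Finset.sum_congr rfl
  intro j _
  ext u
  rw [AlternatingMap.smul_apply, curry2_eval, curry2_eval, AlternatingMap.smul_apply]

end Glue

end EFP

/-- Two effective `k`-forms (`k ≤ n`) on a symplectic vector space `(V, Ω)` that vanish
on exactly the same `k`-dimensional isotropic subspaces are linearly dependent
(one is a scalar multiple of the other). -/
theorem effective_forms_vanishing_on_same_isotropics_are_proportional
    {V : Type*} [AddCommGroup V] [Module ℝ V] {n k : ℕ} (hk : k ≤ n)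
    (Ω : AlternatingMap ℝ V ℝ (Fin 2))
    (b : Module.Basis (Fin n ⊕ Fin n) ℝ V)
    (hee : ∀ i j, Ω ![b (Sum.inl i), b (Sum.inl j)] = 0)
    (hff : ∀ i j, Ω ![b (Sum.inr i), b (Sum.inr j)] = 0)
    (hef : ∀ i j, Ω ![b (Sum.inl i), b (Sum.inr j)] = if i = j then 1 else 0)
    (ω ω' : AlternatingMap ℝ V ℝ (Fin k))
    (hω : IsEffective (fun j => b (Sum.inl j)) (fun j => b (Sum.inr j)) ω)
    (hω' : IsEffective (fun j => b (Sum.inl j)) (fun j => b (Sum.inr j)) ω')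
    (hsame : ∀ L : Submodule ℝ V, Module.finrank ℝ L = k →
      (∀ X ∈ L, ∀ Y ∈ L, Ω ![X, Y] = 0) →
      ((∀ v : Fin k → V, (∀ i, v i ∈ L) → ω v = 0) ↔
        (∀ v : Fin k → V, (∀ i, v i ∈ L) → ω' v = 0))) :
    (∃ c : ℝ, ω' = c • ω) ∨ (∃ c : ℝ, ω = c • ω') := by
  classical
  haveI : FiniteDimensional ℝ V := Module.Finite.of_basis b
  have hnd := EFP.nondeg Ω b hee hff hef
  -- tuple-level iff on isotropic tuples
  have hiff : ∀ v : Fin k → V, EFP.IsIso Ω v → (ω v = 0 ↔ ω' v = 0) := by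
    intro v hv
    by_cases li : LinearIndependent ℝ v
    · set L := Submodule.span ℝ (Set.range v) with hL
      have hfin : Module.finrank ℝ L = k := by
        rw [hL, finrank_span_eq_card li, Fintype.card_fin]
      have hLiso : ∀ X ∈ L, ∀ Y ∈ L, Ω ![X, Y] = 0 := by
        intro X hX Y hY
        refine Submodule.span_induction₂
          (p := fun x y _ _ => Ω ![x, y] = 0) ?_ ?_ ?_ ?_ ?_ ?_ ?_ hX hY
        · rintro x y ⟨i, rfl⟩ ⟨j, rfl⟩
          exact hv i j
        · intro y _
          exact EFP.om_zero_left Ω y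
        · intro x _
          exact EFP.om_zero_right Ω x
        · intro x y z _ _ _ h1 h2
          rw [EFP.om_add_left, h1, h2, add_zero]
        · intro x y z _ _ _ h1 h2
          rw [EFP.om_add_right, h1, h2, add_zero]
        · intro r x y _ _ h1
          rw [EFP.om_smul_left, h1, mul_zero]
        · intro r x y _ _ h1
          rw [EFP.om_smul_right, h1, mul_zero]
      have hs := hsame L hfin hLiso
      have hmemv : ∀ i, v i ∈ L := fun i => Submodule.subset_span (Set.mem_range_self i)
      constructor
      · intro h0
        exact (hs.mp (EFP.vanish_span ω v li h0)) v hmemv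
      · intro h0
        exact (hs.mpr (EFP.vanish_span ω' v li h0)) v hmemv
    · constructor
      · intro _
        exact AlternatingMap.map_linearDependent ω' v li
      · intro _
        exact AlternatingMap.map_linearDependent ω v li
  by_cases H : ∀ v : Fin k → V, EFP.IsIso Ω v → ω v = 0
  · left
    refine ⟨0, ?_⟩
    have hω'0 : ω' = 0 :=
      EFP.lemA Ω hk b hee hff hef ω' (fun v hv => (hiff v hv).mp (H v hv)) hω'
    rw [hω'0, zero_smul]
  · push_neg at H
    obtain ⟨u₀, hu₀iso, hu₀⟩ := H
    left
    set c := ω' u₀ / ω u₀ with hc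
    have hli₀ : LinearIndependent ℝ u₀ := by
      by_contra hdep
      exact hu₀ (AlternatingMap.map_linearDependent ω u₀ hdep)
    have hvan : ∀ v : Fin k → V, EFP.IsIso Ω v → (ω' - c • ω) v = 0 := by
      intro v hv
      rw [AlternatingMap.sub_apply, AlternatingMap.smul_apply]
      by_cases li : LinearIndependent ℝ v
      · by_cases hΦ : (ω v = 0 ∧ ω' v = 0)
        · rw [hΦ.1, hΦ.2]
          simp
        · obtain ⟨W, hW⟩ := EFP.word_trans Ω hnd u₀ v hu₀iso hv hli₀ li
          have hcross := EFP.word_cross Ω ω ω' hiff W u₀ hu₀iso (fun hb => hu₀ hb.1)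
            (by rw [hW]; exact hΦ)
          rw [hW] at hcross
          rw [hc, smul_eq_mul, div_mul_eq_mul_div, sub_eq_zero, eq_div_iff hu₀]
          linarith [hcross]
      · rw [AlternatingMap.map_linearDependent ω v li,
          AlternatingMap.map_linearDependent ω' v li]
        simp
    have hθeff : IsEffective (fun j => b (Sum.inl j)) (fun j => b (Sum.inr j)) (ω' - c • ω) := by
      intro m' hm'
      have h1 := hω m' hm'
      have h2 := hω' m' hm'
      have hdd : (ω' - c • ω).domDomCongr (finCongr hm')
          = ω'.domDomCongr (finCongr hm') - c • ω.domDomCongr (finCongr hm') := by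
        ext v
        simp [AlternatingMap.domDomCongr_apply, AlternatingMap.sub_apply,
          AlternatingMap.smul_apply]
      rw [hdd, EFP.sympContract_sub, EFP.sympContract_smul, h1, h2]
      simp
    have hθ : ω' - c • ω = 0 :=
      EFP.lemA Ω hk b hee hff hef _ hvan hθeff
    exact ⟨c, by rwa [sub_eq_zero] at hθ⟩
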